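/- Let G be a finite group with a shift structure ({X_j}, Y_0, φ) of depth ℓ, and fix j with -1 ≤ j < ℓ - 1. Suppose X_{j+1} = Q^0 ≤ Q^1 ≤ ⋯ ≤ Q^p = X_{j+2} is a chain of subgroups with every Q^n normal in G. Then there exist subgroups P^0, P^1, …, P^p of G, each normal in G, with X_j ≤ X_j* = P^0 ≤ P^1 ≤ ⋯ ≤ P^p = X_{j+1}, such that P^n/P^m ≅ Q^n/Q^m for all 0 ≤ m ≤ n ≤ p, and such that φ maps the subgroup (P^n Y_0)/Y_0 of G/Y_0 onto the subgroup Q^n/X_0 of G/X_0 for every 0 ≤ n ≤ p. -/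

import Mathlib

open scoped Pointwise


/-- A finite group `G` has a *shift structure* `({X_j}, Y₀, φ)` of depth `ℓ ≥ 1`
(indices shifted by one, so `X j` here is the paper's `X_{j-1}`). -/
structure IsShiftStructure {G : Type*} [Group G] [Finite G] (ℓ : ℕ)
    (X : ℕ → Subgroup G) (Y0 : Subgroup G) [Y0.Normal] [(X 1).Normal]
    (φ : (G ⧸ Y0) ≃* (G ⧸ X 1)) : Prop where
  one_le : 1 ≤ ℓ
  bot_eq : X 0 = ⊥
  top_eq : X (ℓ + 1) = ⊤
  mono : ∀ j, X j ≤ X (j + 1)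
  norm : ∀ j, (X j).Normal
  compat : ∀ j ≤ ℓ,
    Subgroup.map φ.toMonoidHom (Subgroup.map (QuotientGroup.mk' Y0) (X j ⊔ Y0)) =
      Subgroup.map (QuotientGroup.mk' (X 1)) (X (j + 1))

/-- `QuotIso A N B M hN hM` says the quotient `A N / N` (the image of `A` in the ambient
quotient by the normal subgroup `N`) is isomorphic as a group to `B M / M`.
When `N ≤ A` and `M ≤ B` this is exactly `A/N ≅ B/M`. -/
def QuotIso {G : Type*} [Group G] {H : Type*} [Group H]
    (A N : Subgroup G) (B M : Subgroup H) (hN : N.Normal) (hM : M.Normal) : Prop :=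
  letI := hN
  letI := hM
  Nonempty (↥(Subgroup.map (QuotientGroup.mk' N) A) ≃* ↥(Subgroup.map (QuotientGroup.mk' M) B))

/-- Dedekind modular law for subgroups, one of them normal. -/
lemma sup_inf_modular {G : Type*} [Group G] (A Y C : Subgroup G) [Y.Normal]
    (hAC : A ≤ C) : A ⊔ (Y ⊓ C) = (A ⊔ Y) ⊓ C := by
  refine le_antisymm (sup_le (le_inf le_sup_left hAC)
    (le_inf (inf_le_left.trans le_sup_right) inf_le_right)) ?_
  rintro x ⟨hx1, hx2⟩
  have hx1' : x ∈ (A : Set G) * (Y : Set G) := by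
    rw [← Subgroup.mul_normal A Y]; exact hx1
  obtain ⟨a, ha, y, hy, rfl⟩ := hx1'
  have hyC : y ∈ C := by
    have := mul_mem (inv_mem (hAC ha)) hx2
    simpa [mul_assoc] using this
  exact Subgroup.mul_mem_sup ha ⟨hy, hyC⟩

/-- If two homomorphisms on `G` have kernels with the same trace on a subgroup `A`,
then the two images of `A` are isomorphic. -/
lemma mapMapEquiv {G K1 K2 : Type*} [Group G] [Group K1] [Group K2]
    (f : G →* K1) (g : G →* K2) (A : Subgroup G) (hfg : f.ker ⊓ A = g.ker ⊓ A) :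
    Nonempty (↥(Subgroup.map f A) ≃* ↥(Subgroup.map g A)) := by
  have hker : (f.comp A.subtype).ker = (g.comp A.subtype).ker := by
    ext x
    have hxA : (x : G) ∈ A := x.2
    have h1 : (x : G) ∈ f.ker ↔ (x : G) ∈ g.ker := by
      constructor
      · intro hx
        have : (x : G) ∈ f.ker ⊓ A := ⟨hx, hxA⟩
        rw [hfg] at this; exact this.1
      · intro hx
        have : (x : G) ∈ g.ker ⊓ A := ⟨hx, hxA⟩
        rw [← hfg] at this; exact this.1
    simpa only [← MonoidHom.comap_ker, Subgroup.mem_comap, Subgroup.coe_subtype] using h1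
  have e1 : A ⧸ (f.comp A.subtype).ker ≃* (f.comp A.subtype).range :=
    QuotientGroup.quotientKerEquivRange _
  have e2 : A ⧸ (g.comp A.subtype).ker ≃* (g.comp A.subtype).range :=
    QuotientGroup.quotientKerEquivRange _
  have hr1 : (f.comp A.subtype).range = Subgroup.map f A := by
    rw [MonoidHom.range_comp, Subgroup.range_subtype]
  have hr2 : (g.comp A.subtype).range = Subgroup.map g A := by
    rw [MonoidHom.range_comp, Subgroup.range_subtype]
  exact ⟨((MulEquiv.subgroupCongr hr1).symm.trans e1.symm).trans
    (((QuotientGroup.quotientMulEquivOfEq hker).trans e2).trans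
      (MulEquiv.subgroupCongr hr2))⟩

/-- Master lemma for producing `QuotIso`s from a pair of homomorphisms to a common
group. -/
lemma quotIso_of_hom {G G' K : Type*} [Group G] [Group G'] [Group K]
    (ψ : G →* K) (χ : G' →* K)
    (A N : Subgroup G) (B M : Subgroup G') (hN : N.Normal) (hM : M.Normal)
    (hA : ψ.ker ⊓ A = N ⊓ A) (hB : χ.ker ⊓ B = M ⊓ B)
    (hmap : Subgroup.map ψ A = Subgroup.map χ B) :
    QuotIso A N B M hN hM := by
  unfold QuotIso
  haveI := hN; haveI := hM
  have h1 : (QuotientGroup.mk' N).ker ⊓ A = ψ.ker ⊓ A := by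
    rw [QuotientGroup.ker_mk', hA]
  have h2 : χ.ker ⊓ B = (QuotientGroup.mk' M).ker ⊓ B := by
    rw [QuotientGroup.ker_mk', hB]
  obtain ⟨eA⟩ := mapMapEquiv (QuotientGroup.mk' N) ψ A h1
  obtain ⟨eB⟩ := mapMapEquiv χ (QuotientGroup.mk' M) B h2
  exact ⟨(eA.trans (MulEquiv.subgroupCongr hmap)).trans eB⟩

/-- fix `j` with `-1 ≤ j < ℓ - 1` (here `i = j + 1 < ℓ`, indices shifted by
one).  Given a chain `X_{j+1} = Q^0 ≤ ⋯ ≤ Q^p = X_{j+2}` of subgroups normal in `G`,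
there is a chain `X_j ≤ X_j* = P^0 ≤ ⋯ ≤ P^p = X_{j+1}` of subgroups normal in `G` with
`P^n/P^m ≅ Q^n/Q^m` for `0 ≤ m ≤ n ≤ p` and `φ((P^n Y_0)/Y_0) = Q^n/X_0` for
`0 ≤ n ≤ p`. -/
theorem shift_structure_chain_transfer {G : Type*} [Group G] [Finite G] (ℓ : ℕ)
    (X : ℕ → Subgroup G) (Y0 : Subgroup G) [Y0.Normal] [(X 1).Normal]
    (φ : (G ⧸ Y0) ≃* (G ⧸ X 1)) (h : IsShiftStructure ℓ X Y0 φ)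
    (i : ℕ) (hi : i < ℓ) (p : ℕ) (Q : ℕ → Subgroup G)
    (hQ0 : Q 0 = X (i + 1)) (hQp : Q p = X (i + 2))
    (hQmono : ∀ n < p, Q n ≤ Q (n + 1))
    (hQnorm : ∀ n ≤ p, (Q n).Normal) :
    ∃ P : ℕ → Subgroup G,
      ∃ hPnorm : ∀ n ≤ p, (P n).Normal,
      P 0 = X i ⊔ (X (i + 1) ⊓ Y0) ∧
      X i ≤ P 0 ∧
      P p = X (i + 1) ∧
      (∀ n < p, P n ≤ P (n + 1)) ∧
      (∀ m n : ℕ, ∀ hmn : m ≤ n, ∀ hnp : n ≤ p,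
        QuotIso (P n) (P m) (Q n) (Q m)
          (hPnorm m (hmn.trans hnp)) (hQnorm m (hmn.trans hnp))) ∧
      (∀ n ≤ p,
        Subgroup.map φ.toMonoidHom (Subgroup.map (QuotientGroup.mk' Y0) (P n ⊔ Y0)) =
          Subgroup.map (QuotientGroup.mk' (X 1)) (Q n)) := by
  classical
  haveI hXn : ∀ j, (X j).Normal := h.norm
  have hXmono : Monotone X := monotone_nat_of_le_succ h.mono
  -- monotonicity of Q on [0, p]
  have hQle : ∀ m n : ℕ, m ≤ n → n ≤ p → Q m ≤ Q n := by
    intro m n hmn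
    induction n, hmn using Nat.le_induction with
    | base => intro _; exact le_rfl
    | succ k hmk ih =>
      intro hkp
      exact (ih (Nat.le_of_lt hkp)).trans (hQmono k hkp)
  have hX1le : X 1 ≤ X (i + 1) := hXmono (Nat.succ_le_succ (Nat.zero_le i))
  have hX1Q : ∀ n ≤ p, X 1 ≤ Q n := by
    intro n hn
    exact (hX1le.trans_eq hQ0.symm).trans (hQle 0 n (Nat.zero_le n) hn)
  set Qbar : ℕ → Subgroup (G ⧸ X 1) := fun n => Subgroup.map (QuotientGroup.mk' (X 1)) (Q n)
    with hQbar
  set R : ℕ → Subgroup G := fun n =>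
    Subgroup.comap (QuotientGroup.mk' Y0) (Subgroup.comap φ.toMonoidHom (Qbar n)) with hR
  set P : ℕ → Subgroup G := fun n => X (i + 1) ⊓ R n with hP
  have hmk'Y0surj : Function.Surjective (QuotientGroup.mk' Y0) :=
    QuotientGroup.mk'_surjective Y0
  have hmk'X1surj : Function.Surjective (QuotientGroup.mk' (X 1)) :=
    QuotientGroup.mk'_surjective (X 1)
  -- image of R n downstairs
  have hmapR : ∀ n, Subgroup.map φ.toMonoidHom (Subgroup.map (QuotientGroup.mk' Y0) (R n))
      = Qbar n := by
    intro n
    rw [hR]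
    rw [Subgroup.map_comap_eq_self_of_surjective hmk'Y0surj,
      Subgroup.map_comap_eq_self_of_surjective (G := G ⧸ Y0) φ.surjective]
  -- Y0 ≤ R n
  have hY0R : ∀ n, Y0 ≤ R n := by
    intro n
    rw [hR]
    have h' := Subgroup.ker_le_comap (QuotientGroup.mk' Y0)
      (Subgroup.comap φ.toMonoidHom (Qbar n))
    rwa [QuotientGroup.ker_mk'] at h'
  -- R is monotone on [0, p]
  have hRmono : ∀ m n : ℕ, m ≤ n → n ≤ p → R m ≤ R n := by
    intro m n hmn hnp
    exact Subgroup.comap_mono (Subgroup.comap_mono (Subgroup.map_mono (hQle m n hmn hnp)))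
  -- computing comap via compat
  have hcomapX : ∀ j ≤ ℓ, Subgroup.comap (QuotientGroup.mk' Y0)
      (Subgroup.comap φ.toMonoidHom
        (Subgroup.map (QuotientGroup.mk' (X 1)) (X (j + 1)))) = X j ⊔ Y0 := by
    intro j hj
    rw [← h.compat j hj, Subgroup.comap_map_eq_self_of_injective φ.injective,
      Subgroup.comap_map_eq, QuotientGroup.ker_mk', sup_assoc, sup_idem]
  have hR0 : R 0 = X i ⊔ Y0 := by
    rw [hR]
    simp only [hQbar, hQ0]
    exact hcomapX i (Nat.le_of_lt hi)
  have hRp : R p = X (i + 1) ⊔ Y0 := by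
    rw [hR]
    simp only [hQbar, hQp]
    exact hcomapX (i + 1) hi
  -- R n ≤ X (i+1) ⊔ Y0
  have hRle : ∀ n ≤ p, R n ≤ X (i + 1) ⊔ Y0 := by
    intro n hn
    exact (hRmono n p hn le_rfl).trans hRp.le
  -- P n ⊔ Y0 = R n
  have hPsup : ∀ n ≤ p, P n ⊔ Y0 = R n := by
    intro n hn
    rw [hP, sup_comm]
    rw [sup_inf_modular Y0 (X (i + 1)) (R n) (hY0R n)]
    refine inf_eq_right.mpr ?_
    rw [sup_comm]
    exact hRle n hn
  -- R n is normal
  have hRnorm : ∀ n ≤ p, (R n).Normal := by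
    intro n hn
    rw [hR]
    exact (((hQnorm n hn).map _ hmk'X1surj).comap φ.toMonoidHom).comap _
  have hPnorm : ∀ n ≤ p, (P n).Normal := by
    intro n hn
    rw [hP]
    haveI := hXn (i + 1)
    haveI := hRnorm n hn
    infer_instance
  -- first compat statement
  have hcompatP : ∀ n ≤ p,
      Subgroup.map φ.toMonoidHom (Subgroup.map (QuotientGroup.mk' Y0) (P n ⊔ Y0)) =
        Subgroup.map (QuotientGroup.mk' (X 1)) (Q n) := by
    intro n hn
    rw [hPsup n hn, hmapR n]
  -- P 0
  have hP0 : P 0 = X i ⊔ (X (i + 1) ⊓ Y0) := by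
    rw [hP]
    simp only [hR0]
    rw [inf_comm, ← sup_inf_modular (X i) Y0 (X (i + 1)) (h.mono i), inf_comm]
  have hPp : P p = X (i + 1) := by
    rw [hP]
    simp only [hRp]
    exact inf_eq_left.mpr le_sup_left
  have hPmono : ∀ n < p, P n ≤ P (n + 1) := by
    intro n hn
    exact inf_le_inf_left _ (hRmono n (n + 1) (Nat.le_succ n) hn)
  refine ⟨P, hPnorm, hP0, ?_, hPp, hPmono, ?_, hcompatP⟩
  · rw [hP0]; exact le_sup_left
  -- the quotient isomorphisms
  intro m n hmn hnp
  have hmp : m ≤ p := hmn.trans hnp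
  haveI hSn : (Qbar m).Normal := (hQnorm m hmp).map _ hmk'X1surj
  set ψ : G →* (G ⧸ X 1) ⧸ Qbar m :=
    ((QuotientGroup.mk' (Qbar m)).comp φ.toMonoidHom).comp (QuotientGroup.mk' Y0) with hψ
  set χ : G →* (G ⧸ X 1) ⧸ Qbar m :=
    (QuotientGroup.mk' (Qbar m)).comp (QuotientGroup.mk' (X 1)) with hχ
  have hkerψ : ψ.ker = R m := by
    rw [hψ, ← MonoidHom.comap_ker, ← MonoidHom.comap_ker, QuotientGroup.ker_mk', hR]
  have hkerχ : χ.ker = Q m := by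
    rw [hχ, ← MonoidHom.comap_ker, QuotientGroup.ker_mk', hQbar, Subgroup.comap_map_eq,
      QuotientGroup.ker_mk']
    exact sup_eq_left.mpr (hX1Q m hmp)
  have hA : ψ.ker ⊓ P n = P m ⊓ P n := by
    have h1 : ψ.ker ⊓ P n = P m := by
      rw [hkerψ, hP]
      rw [inf_left_comm]
      congr 1
      exact inf_eq_left.mpr (hRmono m n hmn hnp)
    have h2 : P m ≤ P n :=
      inf_le_inf_left _ (hRmono m n hmn hnp)
    rw [h1, inf_eq_left.mpr h2]
  have hB : χ.ker ⊓ Q n = Q m ⊓ Q n := by rw [hkerχ]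
  have hmapPY : Subgroup.map (QuotientGroup.mk' Y0) (P n) =
      Subgroup.map (QuotientGroup.mk' Y0) (P n ⊔ Y0) := by
    rw [Subgroup.map_sup]
    have hbot : Subgroup.map (QuotientGroup.mk' Y0) Y0 = ⊥ := by
      rw [Subgroup.map_eq_bot_iff, QuotientGroup.ker_mk']
    rw [hbot, sup_bot_eq]
  have hmap : Subgroup.map ψ (P n) = Subgroup.map χ (Q n) := by
    rw [hψ, hχ, ← Subgroup.map_map, ← Subgroup.map_map, ← Subgroup.map_map,
      hmapPY, hcompatP n hnp]
  exact quotIso_of_hom ψ χ (P n) (P m) (Q n) (Q m) _ _ hA hB hmap
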